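/- For any support matrix A and any subgraph H' = (V',E') of H, α(H') ≤ ‖Ã^T Ã‖, where Ã = U^{-1/2} A W^{1/2}, U and W being the diagonal matrices of hyperedge and vertex weights. -/

import Mathlib

open Matrix in
/-- The operator norm (on Euclidean spaces) of a real matrix. -/
noncomputable def matOpNorm {a b : ℕ} (B : Matrix (Fin a) (Fin b) ℝ) : ℝ :=
  ‖LinearMap.toContinuousLinearMap (Matrix.toEuclideanLin B)‖

open Matrix in
/-- For any support matrix `A` and any subgraph `H' = (V', E')` of `H`,
`α(H') ≤ ‖Ãᵀ Ã‖` where `Ã = U^{-1/2} A W^{1/2}`, `U`, `W` the diagonal weight matrices. -/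
theorem stmt_13 (n m : ℕ) (w : Fin n → ℝ) (u : Fin m → ℝ)
    (supp : Fin m → Finset (Fin n))
    (hw : ∀ j, 0 < w j) (hu : ∀ i, 0 < u i)
    (A : Matrix (Fin m) (Fin n) ℝ)
    (hA0 : ∀ i j, 0 ≤ A i j)
    (hAz : ∀ i j, j ∉ supp i → A i j = 0)
    (hArow : ∀ i, ∑ j, w j * A i j = u i)
    (V' : Finset (Fin n)) (E' : Finset (Fin m))
    (hsub : ∀ i ∈ E', supp i ⊆ V') (hVne : V'.Nonempty) :
    (∑ i ∈ E', u i) / (∑ j ∈ V', w j) ≤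
      matOpNorm ((Matrix.diagonal (fun i => (Real.sqrt (u i))⁻¹) * A *
        Matrix.diagonal (fun j => Real.sqrt (w j)))ᵀ *
        (Matrix.diagonal (fun i => (Real.sqrt (u i))⁻¹) * A *
        Matrix.diagonal (fun j => Real.sqrt (w j)))) := by
  set B : Matrix (Fin m) (Fin n) ℝ :=
    Matrix.diagonal (fun i => (Real.sqrt (u i))⁻¹) * A *
      Matrix.diagonal (fun j => Real.sqrt (w j)) with hB
  set M : Matrix (Fin n) (Fin n) ℝ := Bᵀ * B with hM
  set f := LinearMap.toContinuousLinearMap (Matrix.toEuclideanLin M) with hf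
  set x0 : Fin n → ℝ := fun j => if j ∈ V' then Real.sqrt (w j) else 0 with hx0
  set x : EuclideanSpace ℝ (Fin n) := (WithLp.equiv 2 _).symm x0 with hx
  have hwV : 0 < ∑ j ∈ V', w j := Finset.sum_pos (fun j _ => hw j) hVne
  -- entries of B
  have hBe : ∀ i j, B i j = (Real.sqrt (u i))⁻¹ * A i j * Real.sqrt (w j) := by
    intro i j
    simp [hB, Matrix.mul_diagonal, Matrix.diagonal_mul]
  -- B *ᵥ x0 on E'
  have hBx : ∀ i ∈ E', (B *ᵥ x0) i = Real.sqrt (u i) := by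
    intro i hi
    have : (B *ᵥ x0) i = (Real.sqrt (u i))⁻¹ * ∑ j, w j * A i j := by
      simp only [Matrix.mulVec, dotProduct, hBe, Finset.mul_sum]
      refine Finset.sum_congr rfl fun j _ => ?_
      by_cases hj : j ∈ V'
      · simp only [hx0, if_pos hj]
        have : Real.sqrt (w j) * Real.sqrt (w j) = w j :=
          Real.mul_self_sqrt (hw j).le
        ring_nf
        rw [Real.sq_sqrt (hw j).le]
      · have hjs : j ∉ supp i := fun h => hj (hsub i hi h)
        simp [hx0, if_neg hj, hAz i j hjs]
    rw [this, hArow i]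
    rw [inv_mul_eq_div, Real.div_sqrt]
  -- lower bound on the quadratic form
  have hquad : (∑ i ∈ E', u i) ≤ x0 ⬝ᵥ (M *ᵥ x0) := by
    have h1 : x0 ⬝ᵥ (M *ᵥ x0) = (B *ᵥ x0) ⬝ᵥ (B *ᵥ x0) := by
      rw [hM, ← Matrix.mulVec_mulVec, Matrix.dotProduct_mulVec, Matrix.vecMul_transpose]
    rw [h1]
    have h2 : (B *ᵥ x0) ⬝ᵥ (B *ᵥ x0) = ∑ i, ((B *ᵥ x0) i) ^ 2 := by
      simp [dotProduct, sq]
    rw [h2]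
    calc ∑ i ∈ E', u i = ∑ i ∈ E', ((B *ᵥ x0) i) ^ 2 := by
          refine Finset.sum_congr rfl fun i hi => ?_
          rw [hBx i hi, Real.sq_sqrt (hu i).le]
      _ ≤ ∑ i, ((B *ᵥ x0) i) ^ 2 :=
          Finset.sum_le_sum_of_subset_of_nonneg (Finset.subset_univ _)
            (fun i _ _ => sq_nonneg _)
  -- inner product identity
  have hinner : inner ℝ x (f x) = x0 ⬝ᵥ (M *ᵥ x0) := by
    have : f x = (WithLp.equiv 2 (Fin n → ℝ)).symm (M *ᵥ x0) := by
      simp [hf, hx, Matrix.toEuclideanLin_toLp]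
    rw [this, hx]
    simp only [WithLp.equiv_symm_apply, EuclideanSpace.inner_toLp_toLp]
    simp [dotProduct, mul_comm]
  -- norm of x
  have hxnorm : ‖x‖ ^ 2 = ∑ j ∈ V', w j := by
    have : ‖x‖ ^ 2 = ∑ j, ‖x0 j‖ ^ 2 := by
      rw [hx, EuclideanSpace.norm_eq]
      rw [Real.sq_sqrt (Finset.sum_nonneg fun j _ => sq_nonneg _)]
      rfl
    rw [this]
    rw [show (∑ j, ‖x0 j‖ ^ 2) = ∑ j, (if j ∈ V' then w j else 0) from
      Finset.sum_congr rfl fun j _ => by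
        by_cases hj : j ∈ V' <;>
          simp [hx0, hj, Real.sq_sqrt (hw j).le, abs_of_nonneg (Real.sqrt_nonneg _)]]
    simp [Finset.sum_ite_mem]
  -- conclude
  have hb : (inner ℝ x (f x) : ℝ) ≤ ‖f‖ * ‖x‖ ^ 2 := by
    calc (inner ℝ x (f x) : ℝ) ≤ ‖x‖ * ‖f x‖ := real_inner_le_norm x (f x)
      _ ≤ ‖x‖ * (‖f‖ * ‖x‖) := by
          exact mul_le_mul_of_nonneg_left (f.le_opNorm x) (norm_nonneg x)
      _ = ‖f‖ * ‖x‖ ^ 2 := by ring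
  have key : (∑ i ∈ E', u i) ≤ ‖f‖ * (∑ j ∈ V', w j) := by
    rw [← hxnorm]
    calc (∑ i ∈ E', u i) ≤ x0 ⬝ᵥ (M *ᵥ x0) := hquad
      _ = inner ℝ x (f x) := hinner.symm
      _ ≤ ‖f‖ * ‖x‖ ^ 2 := hb
  rw [div_le_iff₀ hwV]
  unfold matOpNorm
  exact key
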